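/- With G = G_{d,1-d,r} the two-lane flux function (γ_0 = d, γ_1 = 1-d, d ≥ 1/2, r > 1), the third derivative satisfies G'''(ρ) = 6r (r-1)^2/(r+1)^4 · ψ(ρ)^{-5/2} · [(2d-1)·4r/((r-1)(r+1)) + (1-ρ)], so G''' changes sign exactly once on [0,2]∩{ρ : ψ(ρ)>0}, at ρ̃_0 = 1 + (2d-1)·4r/((r-1)(r+1)) ≥ 1; consequently G'' is increasing on [0, ρ̃_0] and decreasing on [ρ̃_0, 2] (where defined). -/

import Mathlib

/-- `ψ(ρ) = 1 + ((r-1)/(r+1))² ρ(ρ-2)`. -/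
noncomputable def psiTL (r ρ : ℝ) : ℝ := 1 + ((r - 1) / (r + 1))^2 * ρ * (ρ - 2)

/-- `φ(ρ) = (1/2)((r+1)/(r-1))(1 - √ψ(ρ))` for `r ≠ 1`, and `φ ≡ 0` for `r = 1`. -/
noncomputable def phiTL (r ρ : ℝ) : ℝ :=
  if r = 1 then 0 else (1 / 2) * ((r + 1) / (r - 1)) * (1 - Real.sqrt (psiTL r ρ))

/-- The two-lane flux function `G_{γ0,γ1,r}`. -/
noncomputable def GTL (γ0 γ1 r ρ : ℝ) : ℝ :=
  (γ0 + γ1) * (ρ / 2) * (1 - ρ / 2) + (γ0 - γ1) * (1 - ρ) * phiTL r ρ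
    - (γ0 + γ1) * (phiTL r ρ)^2



noncomputable def psiB (b ρ : ℝ) : ℝ := 1 + b^2*ρ*(ρ-2)
noncomputable def sB (b ρ : ℝ) : ℝ := Real.sqrt (psiB b ρ)
noncomputable def GB (b e ρ : ℝ) : ℝ :=
  ρ/2*(1-ρ/2) + e*(1-ρ)*(1 - sB b ρ)/(2*b) - (1 - sB b ρ)^2/(4*b^2)
noncomputable def D1B (b e ρ : ℝ) : ℝ :=
  1/2 - ρ/2 + e/(2*b)*(sB b ρ - 1) + e*b/2*(ρ-1)^2/sB b ρ
    + (1 - sB b ρ)*(ρ-1)/(2*sB b ρ)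
noncomputable def D2B (b e ρ : ℝ) : ℝ :=
  -(1/2) + e*b*(ρ-1)/sB b ρ + e*b/2*(1-b^2)*(ρ-1)/(sB b ρ)^3
    - b^2*(ρ-1)^2/(2*(sB b ρ)^2) + (1-b^2)*(1 - sB b ρ)/(2*(sB b ρ)^3)
noncomputable def D3B (b e ρ : ℝ) : ℝ :=
  3/2*b^2*(1-b^2)/(sB b ρ)^5 * (e*(1-b^2)/b + (1-ρ))

lemma psiB_pos {b : ℝ} (hb1 : b^2 < 1) (ρ : ℝ) : 0 < psiB b ρ := by
  unfold psiB; nlinarith [sq_nonneg (b*(ρ-1))]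

lemma sB_pos {b : ℝ} (hb1 : b^2 < 1) (ρ : ℝ) : 0 < sB b ρ :=
  Real.sqrt_pos.mpr (psiB_pos hb1 ρ)

lemma sB_sq {b : ℝ} (hb1 : b^2 < 1) (ρ : ℝ) : (sB b ρ)^2 = 1 + b^2*ρ*(ρ-2) :=
  Real.sq_sqrt (psiB_pos hb1 ρ).le

lemma hasDerivAt_sB {b : ℝ} (hb1 : b^2 < 1) (ρ : ℝ) :
    HasDerivAt (fun x => sB b x) (b^2*(ρ-1)/ sB b ρ) ρ := by
  have hψ : HasDerivAt (fun x : ℝ => psiB b x) (2*b^2*(ρ-1)) ρ := by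
    unfold psiB
    have := (((hasDerivAt_id ρ).const_mul (b^2)).mul ((hasDerivAt_id ρ).sub_const 2)).const_add 1
    refine this.congr_deriv ?_
    simp [id]
    ring
  have h := hψ.sqrt (psiB_pos hb1 ρ).ne'
  refine h.congr_deriv ?_
  symm
  have hs := (sB_pos hb1 ρ)
  unfold sB at hs ⊢
  field_simp
  all_goals ring

lemma hasDerivAt_GB {b : ℝ} (hb : 0 < b) (hb1 : b^2 < 1) (e ρ : ℝ) :
    HasDerivAt (fun x => GB b e x) (D1B b e ρ) ρ := by
  have hs := hasDerivAt_sB hb1 ρ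
  have h0 : HasDerivAt (fun x : ℝ => x/2*(1-x/2))
      ((1/2)*(1-ρ/2) + ρ/2*(-(1/2))) ρ := by
    have := ((hasDerivAt_id ρ).div_const 2).mul (((hasDerivAt_id ρ).div_const 2).const_sub 1)
    exact this
  have h1 := ((((hasDerivAt_id ρ).const_sub 1).const_mul e).mul (hs.const_sub 1)).div_const (2*b)
  have h2 := ((hs.const_sub 1).pow 2).div_const (4*b^2)
  have h := (h0.add h1).sub h2
  refine h.congr_deriv ?_
  symm
  unfold D1B
  simp only [id, Pi.pow_apply, Pi.mul_apply, Pi.div_apply, Pi.add_apply, Pi.sub_apply]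
  have ht := (sB_pos hb1 ρ)
  field_simp
  all_goals ring

lemma hasDerivAt_D1B {b : ℝ} (hb : 0 < b) (hb1 : b^2 < 1) (e ρ : ℝ) :
    HasDerivAt (fun x => D1B b e x) (D2B b e ρ) ρ := by
  have hs := hasDerivAt_sB hb1 ρ
  have ht := (sB_pos hb1 ρ)
  have hA : HasDerivAt (fun x : ℝ => 1/2 - x/2) (-(1/2) : ℝ) ρ := by
    have := ((hasDerivAt_id ρ).div_const 2).const_sub (1/2)
    exact this
  have hB := (hs.sub_const 1).const_mul (e/(2*b))
  have hC := ((((hasDerivAt_id ρ).sub_const 1).pow 2).const_mul (e*b/2)).div hs ht.ne'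
  have hD := ((hs.const_sub 1).mul ((hasDerivAt_id ρ).sub_const 1)).div (hs.const_mul 2)
      (by positivity)
  have h := ((hA.add hB).add hC).add hD
  refine h.congr_deriv ?_
  symm
  unfold D2B
  simp only [id, Pi.pow_apply, Pi.mul_apply, Pi.div_apply, Pi.add_apply, Pi.sub_apply]
  have ht2 := sB_sq hb1 ρ
  set t := sB b ρ with hts
  field_simp
  linear_combination (t - b*e*ρ + b*e - 1) * ht2

lemma hasDerivAt_D2B {b : ℝ} (hb : 0 < b) (hb1 : b^2 < 1) (e ρ : ℝ) :
    HasDerivAt (fun x => D2B b e x) (D3B b e ρ) ρ := by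
  have hs := hasDerivAt_sB hb1 ρ
  have ht := (sB_pos hb1 ρ)
  have hB := (((hasDerivAt_id ρ).sub_const 1).const_mul (e*b)).div hs ht.ne'
  have hC := (((hasDerivAt_id ρ).sub_const 1).const_mul (e*b/2*(1-b^2))).div (hs.pow 3)
      (pow_pos ht 3).ne'
  have hD := ((((hasDerivAt_id ρ).sub_const 1).pow 2).const_mul (b^2)).div
      ((hs.pow 2).const_mul 2) (mul_pos two_pos (pow_pos ht 2)).ne'
  have hE := ((hs.const_sub 1).const_mul (1-b^2)).div ((hs.pow 3).const_mul 2) (mul_pos two_pos (pow_pos ht 3)).ne'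
  have h := ((((hasDerivAt_const ρ (-(1/2) : ℝ)).add hB).add hC).sub hD).add hE
  refine h.congr_deriv ?_
  symm
  unfold D3B
  simp only [id, Pi.pow_apply, Pi.mul_apply, Pi.div_apply, Pi.add_apply, Pi.sub_apply]
  have ht2 := sB_sq hb1 ρ
  set t := sB b ρ with hts
  field_simp
  linear_combination (-2*t^4*b*e + 2*t^3*b^2*ρ - 2*t^3*b^2 + 3*t^2*b^3*e - 3*t^2*b*e) * ht2

theorem GTL_third_derivative (d r : ℝ) (hd : 1 / 2 ≤ d) (hr : 1 < r) :
    let G : ℝ → ℝ := fun ρ => GTL d (1 - d) r ρ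
    let ρ0 : ℝ := 1 + (2 * d - 1) * (4 * r) / ((r - 1) * (r + 1))
    (∀ ρ ∈ Set.Icc (0:ℝ) 2,
      iteratedDeriv 3 G ρ =
        6 * r * ((r - 1)^2 / (r + 1)^4) * (psiTL r ρ) ^ (-(5:ℝ) / 2) *
          ((2 * d - 1) * (4 * r) / ((r - 1) * (r + 1)) + (1 - ρ))) ∧
    1 ≤ ρ0 ∧
    (∀ ρ ∈ Set.Icc (0:ℝ) 2,
      (ρ < ρ0 → 0 < iteratedDeriv 3 G ρ) ∧ (ρ0 < ρ → iteratedDeriv 3 G ρ < 0)) ∧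
    StrictMonoOn (iteratedDeriv 2 G) (Set.Icc 0 (min ρ0 2)) ∧
    StrictAntiOn (iteratedDeriv 2 G) (Set.Icc ρ0 2) := by
  intro G ρ0
  have hr1 : (0:ℝ) < r - 1 := by linarith
  have hr2 : (0:ℝ) < r + 1 := by linarith
  set b : ℝ := (r - 1) / (r + 1) with hb_def
  have hb : 0 < b := div_pos hr1 hr2
  have hblt : b < 1 := by
    rw [hb_def, div_lt_one hr2]; linarith
  have hb1 : b ^ 2 < 1 := by nlinarith
  have hρ0def : ρ0 = 1 + (2 * d - 1) * (4 * r) / ((r - 1) * (r + 1)) := rfl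
  have hpsi : ∀ x, psiB b x = psiTL r x := by
    intro x; rw [psiB, psiTL, hb_def]
  have hGeq : G = fun x => GB b (2 * d - 1) x := by
    funext x
    show GTL d (1 - d) r x = GB b (2 * d - 1) x
    rw [GTL, phiTL, GB, sB, hpsi x, if_neg (by linarith : r ≠ 1)]
    have hs0 : (0:ℝ) ≤ Real.sqrt (psiTL r x) := Real.sqrt_nonneg _
    set s : ℝ := Real.sqrt (psiTL r x) with hs_def
    rw [hb_def]
    field_simp
    ring
  have h1 : deriv G = fun x => D1B b (2 * d - 1) x := by
    rw [hGeq]; exact funext fun x => (hasDerivAt_GB hb hb1 (2 * d - 1) x).deriv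
  have h2 : deriv (fun x => D1B b (2 * d - 1) x) = fun x => D2B b (2 * d - 1) x :=
    funext fun x => (hasDerivAt_D1B hb hb1 (2 * d - 1) x).deriv
  have h3 : deriv (fun x => D2B b (2 * d - 1) x) = fun x => D3B b (2 * d - 1) x :=
    funext fun x => (hasDerivAt_D2B hb hb1 (2 * d - 1) x).deriv
  have hit2 : iteratedDeriv 2 G = fun x => D2B b (2 * d - 1) x := by
    rw [iteratedDeriv_succ, iteratedDeriv_one, h1, h2]
  have hit3 : iteratedDeriv 3 G = fun x => D3B b (2 * d - 1) x := by
    rw [iteratedDeriv_succ, hit2, h3]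
  have hψpos : ∀ x, 0 < psiTL r x := fun x => (hpsi x) ▸ psiB_pos hb1 x
  have hform : ∀ x, iteratedDeriv 3 G x =
      6 * r * ((r - 1)^2 / (r + 1)^4) * (psiTL r x) ^ (-(5:ℝ) / 2) *
        ((2 * d - 1) * (4 * r) / ((r - 1) * (r + 1)) + (1 - x)) := by
    intro x
    have hrpow : (psiTL r x) ^ (-(5:ℝ) / 2) = ((sB b x) ^ (5:ℕ))⁻¹ := by
      rw [← hpsi x, show -(5:ℝ)/2 = (1/2) * (-(5:ℕ) : ℝ) by norm_num,
        Real.rpow_mul (psiB_pos hb1 x).le, ← Real.sqrt_eq_rpow,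
        Real.rpow_neg (Real.sqrt_nonneg _), Real.rpow_natCast]
      rfl
    have hsp := sB_pos hb1 x
    simp only [hit3]
    rw [D3B, hrpow, hb_def]
    have hs0 : sB ((r-1)/(r+1)) x ≠ 0 := by rw [← hb_def]; exact hsp.ne'
    field_simp
    ring
  have hA : ∀ x, 0 < 6 * r * ((r - 1)^2 / (r + 1)^4) * (psiTL r x) ^ (-(5:ℝ) / 2) := by
    intro x
    have h5 := Real.rpow_pos_of_pos (hψpos x) (-(5:ℝ) / 2)
    have hx2 : (0:ℝ) < (r - 1)^2 / (r + 1)^4 := by positivity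
    exact mul_pos (mul_pos (by linarith) hx2) h5
  have hpos : ∀ x, x < ρ0 → 0 < iteratedDeriv 3 G x := by
    intro x hx
    rw [hform x]
    refine mul_pos (hA x) ?_
    rw [hρ0def] at hx; linarith
  have hneg : ∀ x, ρ0 < x → iteratedDeriv 3 G x < 0 := by
    intro x hx
    rw [hform x]
    refine mul_neg_of_pos_of_neg (hA x) ?_
    rw [hρ0def] at hx; linarith
  have hρ0ge : (1:ℝ) ≤ ρ0 := by
    rw [hρ0def]
    have : 0 ≤ (2 * d - 1) * (4 * r) / ((r - 1) * (r + 1)) :=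
      div_nonneg (mul_nonneg (by linarith) (by linarith)) (by positivity)
    linarith
  have hcont : Continuous fun x => D2B b (2 * d - 1) x :=
    continuous_iff_continuousAt.mpr fun x => (hasDerivAt_D2B hb hb1 (2 * d - 1) x).continuousAt
  have hderiv23 : deriv (iteratedDeriv 2 G) = iteratedDeriv 3 G := (iteratedDeriv_succ).symm
  refine ⟨fun ρ _ => hform ρ, hρ0ge, fun ρ _ => ⟨hpos ρ, hneg ρ⟩, ?_, ?_⟩
  · apply strictMonoOn_of_deriv_pos (convex_Icc _ _)
    · rw [hit2]; exact hcont.continuousOn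
    · intro x hx
      rw [interior_Icc] at hx
      rw [hderiv23]
      exact hpos x (lt_of_lt_of_le hx.2 (min_le_left _ _))
  · apply strictAntiOn_of_deriv_neg (convex_Icc _ _)
    · rw [hit2]; exact hcont.continuousOn
    · intro x hx
      rw [interior_Icc] at hx
      rw [hderiv23]
      exact hneg x hx.1
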